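/- Let V_β > V_δ > 0, let ρ = V_δ/V_β ∈ (0, 1), c > 0, and define F(b) = r(b; c)·(1 − r(b/√(V_β/V_δ − 1); c)) for b ≥ 0, where r(b; c) = Φ(−c−b) + Φ(−c+b). Then as ρ → 0 (i.e., V_β/V_δ → ∞), sup_{b ≥ 0} F(b) → 1 − r(0; c). -/

import Mathlib

open MeasureTheory ProbabilityTheory

/-- Standard normal CDF. -/
noncomputable def Phi (x : ℝ) : ℝ := ((gaussianReal 0 1) (Set.Iic x)).toReal

/-- `r(b; c) = Φ(−c − b) + Φ(−c + b)`. -/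
noncomputable def r (b c : ℝ) : ℝ := Phi (-c - b) + Phi (-c + b)

lemma Phi_eq (x : ℝ) : Phi x = ∫ t in Set.Iic x, gaussianPDFReal 0 1 t := by
  rw [Phi, gaussianReal_apply_eq_integral 0 one_ne_zero,
    ENNReal.toReal_ofReal (integral_nonneg fun t => gaussianPDFReal_nonneg _ _ _)]

lemma gpdf_even (x : ℝ) : gaussianPDFReal 0 1 (-x) = gaussianPDFReal 0 1 x := by
  simp [gaussianPDFReal, neg_sq]

lemma Phi_continuous : Continuous Phi := by
  have key : ∀ x, Phi x = (∫ t in (0:ℝ)..x, gaussianPDFReal 0 1 t) + Phi 0 := by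
    intro x
    rw [Phi_eq, Phi_eq,
      ← intervalIntegral.integral_Iic_sub_Iic (integrable_gaussianPDFReal 0 1).integrableOn
        (integrable_gaussianPDFReal 0 1).integrableOn]
    ring
  rw [show Phi = fun x => (∫ t in (0:ℝ)..x, gaussianPDFReal 0 1 t) + Phi 0 from funext key]
  exact ((integrable_gaussianPDFReal 0 1).continuous_primitive 0).add continuous_const

lemma Phi_mono : Monotone Phi := fun x y h =>
  ENNReal.toReal_mono (measure_ne_top _ _) (measure_mono (Set.Iic_subset_Iic.2 h))

lemma Phi_nonneg (x : ℝ) : 0 ≤ Phi x := ENNReal.toReal_nonneg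

lemma Phi_add_Phi_neg (x : ℝ) : Phi x + Phi (-x) = 1 := by
  have h1 : Phi (-x) = ∫ t in Set.Ioi x, gaussianPDFReal 0 1 t := by
    rw [Phi_eq, show Set.Ioi x = Set.Ioi (-(-x)) by rw [neg_neg],
      ← integral_comp_neg_Iic]
    exact setIntegral_congr_fun measurableSet_Iic fun t _ => (gpdf_even t).symm
  rw [Phi_eq, h1,
    intervalIntegral.integral_Iic_add_Ioi (integrable_gaussianPDFReal 0 1).integrableOn
      (integrable_gaussianPDFReal 0 1).integrableOn,
    integral_gaussianPDFReal_eq_one 0 one_ne_zero]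

lemma Phi_neg (x : ℝ) : Phi (-x) = 1 - Phi x := by
  have := Phi_add_Phi_neg x; linarith

lemma Phi_le_one (x : ℝ) : Phi x ≤ 1 := by
  have := Phi_add_Phi_neg x
  have := Phi_nonneg (-x)
  linarith

lemma Phi_tendsto_atTop : Filter.Tendsto Phi Filter.atTop (nhds 1) := by
  have h := tendsto_measure_Iic_atTop (gaussianReal 0 1)
  rw [measure_univ] at h
  have h2 := (ENNReal.tendsto_toReal ENNReal.one_ne_top).comp h
  exact h2

lemma Phi_tendsto_atBot : Filter.Tendsto Phi Filter.atBot (nhds 0) := by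
  have h : Filter.Tendsto (fun x : ℝ => 1 - Phi (-x)) Filter.atBot (nhds 0) := by
    have := Phi_tendsto_atTop.comp
      (Filter.tendsto_neg_atBot_atTop (G := ℝ))
    have h2 := (tendsto_const_nhds (x := (1:ℝ)) (f := Filter.atBot)).sub this
    simpa using h2
  refine h.congr fun x => ?_
  rw [Phi_neg]; ring

lemma gpdf_le {s t : ℝ} (h : s ^ 2 ≤ t ^ 2) :
    gaussianPDFReal 0 1 t ≤ gaussianPDFReal 0 1 s := by
  simp only [gaussianPDFReal, NNReal.coe_one, mul_one, sub_zero]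
  apply mul_le_mul_of_nonneg_left _ (inv_nonneg.2 (Real.sqrt_nonneg _))
  exact Real.exp_le_exp.2 (by linarith)

/-- Key monotonicity: for `x ≥ 0` and `c > 0`, `r 0 c ≤ r x c`. -/
lemma r_zero_le (c : ℝ) (hc : 0 < c) {x : ℝ} (hx : 0 ≤ x) : r 0 c ≤ r x c := by
  have hint : ∀ a b : ℝ, IntervalIntegrable (gaussianPDFReal 0 1) volume a b :=
    fun a b => (integrable_gaussianPDFReal 0 1).intervalIntegrable
  have e1 : Phi (-c + x) - Phi (-c) = ∫ t in (-c)..(-c + x), gaussianPDFReal 0 1 t := by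
    rw [Phi_eq, Phi_eq]
    exact intervalIntegral.integral_Iic_sub_Iic (integrable_gaussianPDFReal 0 1).integrableOn
      (integrable_gaussianPDFReal 0 1).integrableOn
  have e2 : Phi (c + x) - Phi c = ∫ t in c..(c + x), gaussianPDFReal 0 1 t := by
    rw [Phi_eq, Phi_eq]
    exact intervalIntegral.integral_Iic_sub_Iic (integrable_gaussianPDFReal 0 1).integrableOn
      (integrable_gaussianPDFReal 0 1).integrableOn
  have e3 : (∫ t in c..(c + x), gaussianPDFReal 0 1 t)
      = ∫ t in (-c)..(-c + x), gaussianPDFReal 0 1 (t + 2 * c) := by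
    rw [intervalIntegral.integral_comp_add_right (gaussianPDFReal 0 1) (2 * c)]
    norm_num
    ring_nf
  have e4 : (∫ t in (-c)..(-c + x), gaussianPDFReal 0 1 (t + 2 * c))
      ≤ ∫ t in (-c)..(-c + x), gaussianPDFReal 0 1 t := by
    have hint2 : IntervalIntegrable (fun u => gaussianPDFReal 0 1 (u + 2*c))
        volume (-c) (-c + x) := by
      simp only [gaussianPDFReal_add]
      exact (integrable_gaussianPDFReal _ 1).intervalIntegrable
    apply intervalIntegral.integral_mono_on (by linarith) hint2 (hint _ _)
    intro t ht
    exact gpdf_le (by nlinarith [ht.1])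
  have key : Phi (c + x) - Phi c ≤ Phi (-c + x) - Phi (-c) := by
    rw [e1, e2, e3]; exact e4
  have s1 : Phi (-c) = 1 - Phi c := Phi_neg c
  have s2 : Phi (-c - x) = 1 - Phi (c + x) := by
    rw [show -c - x = -(c + x) by ring]; exact Phi_neg (c + x)
  simp only [r, sub_zero, add_zero]
  linarith

lemma r_nonneg (b c : ℝ) : 0 ≤ r b c := add_nonneg (Phi_nonneg _) (Phi_nonneg _)

lemma r_le_one (c : ℝ) (hc : 0 < c) (b : ℝ) : r b c ≤ 1 := by
  have h1 : Phi (-c - b) = 1 - Phi (c + b) := by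
    rw [show -c - b = -(c + b) by ring]; exact Phi_neg (c + b)
  have h2 : Phi (-c + b) ≤ Phi (c + b) := Phi_mono (by linarith)
  simp only [r]; rw [h1]; linarith

lemma r_continuous' (c : ℝ) : Continuous fun b => r b c := by
  have h1 : Continuous fun b : ℝ => -c - b := by continuity
  have h2 : Continuous fun b : ℝ => -c + b := by continuity
  exact (Phi_continuous.comp h1).add (Phi_continuous.comp h2)

lemma r_tendsto_one (c : ℝ) :
    Filter.Tendsto (fun b => r b c) Filter.atTop (nhds 1) := by
  have h1 : Filter.Tendsto (fun b : ℝ => Phi (-c - b)) Filter.atTop (nhds 0) := by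
    apply Phi_tendsto_atBot.comp
    exact (Filter.tendsto_atBot_add_const_left Filter.atTop (-c)
      (Filter.tendsto_neg_atTop_atBot (G := ℝ))).congr fun b => by ring
  have h2 : Filter.Tendsto (fun b : ℝ => Phi (-c + b)) Filter.atTop (nhds 1) := by
    apply Phi_tendsto_atTop.comp
    exact Filter.tendsto_atTop_add_const_left _ _ Filter.tendsto_id
  simpa [r] using h1.add h2

lemma sqrt_tendsto_atTop : Filter.Tendsto Real.sqrt Filter.atTop Filter.atTop := by
  refine Filter.tendsto_atTop_atTop.2 fun b => ⟨b ^ 2 ⊔ 1, fun a ha => ?_⟩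
  have h1 : b ^ 2 ≤ a := le_trans (le_max_left _ _) ha
  have ha0 : (0:ℝ) ≤ a := le_trans (by positivity) (le_trans (le_max_right _ _) ha)
  nlinarith [Real.sq_sqrt ha0, Real.sqrt_nonneg a, sq_nonneg (b + Real.sqrt a),
    sq_nonneg (b - Real.sqrt a)]

/-- With `v = V_β/V_δ`, as `v → ∞` (i.e. `ρ = V_δ/V_β → 0`),
`sup_{b ≥ 0} r(b;c)·(1 − r(b/√(v−1); c)) → 1 − r(0; c)`. -/
theorem stmt13 (c : ℝ) (hc : 0 < c) :
    Filter.Tendsto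
      (fun v : ℝ =>
        sSup {y : ℝ | ∃ b : ℝ, 0 ≤ b ∧
          y = r b c * (1 - r (b / Real.sqrt (v - 1)) c)})
      Filter.atTop (nhds (1 - r 0 c)) := by
  set L := 1 - r 0 c with hLdef
  set S : ℝ → Set ℝ := fun v => {y : ℝ | ∃ b : ℝ, 0 ≤ b ∧
    y = r b c * (1 - r (b / Real.sqrt (v - 1)) c)} with hS
  have hBound : ∀ v : ℝ, ∀ y ∈ S v, y ≤ L := by
    rintro v y ⟨b, hb, rfl⟩
    have hx : 0 ≤ b / Real.sqrt (v - 1) := div_nonneg hb (Real.sqrt_nonneg _)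
    have h1 : 0 ≤ 1 - r (b / Real.sqrt (v - 1)) c :=
      sub_nonneg.2 (r_le_one c hc _)
    calc r b c * (1 - r (b / Real.sqrt (v - 1)) c)
        ≤ 1 - r (b / Real.sqrt (v - 1)) c :=
          mul_le_of_le_one_left h1 (r_le_one c hc b)
      _ ≤ L := by
          rw [hLdef]
          have := r_zero_le c hc hx
          linarith
  have hNe : ∀ v : ℝ, (S v).Nonempty := fun v => ⟨_, 0, le_rfl, rfl⟩
  have hBdd : ∀ v : ℝ, BddAbove (S v) := fun v => ⟨L, fun y hy => hBound v y hy⟩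
  -- lower bound sequence
  set s : ℝ → ℝ := fun v => Real.sqrt (Real.sqrt (v - 1)) with hs
  set g : ℝ → ℝ := fun v => r (s v) c * (1 - r (s v / Real.sqrt (v - 1)) c) with hg
  have hgmem : ∀ v : ℝ, g v ∈ S v := fun v => ⟨s v, Real.sqrt_nonneg _, rfl⟩
  have hglesup : ∀ v : ℝ, g v ≤ sSup (S v) := fun v => le_csSup (hBdd v) (hgmem v)
  have hsuple : ∀ v : ℝ, sSup (S v) ≤ L := fun v => csSup_le (hNe v) (hBound v)
  -- g tends to L
  have hstendsto : Filter.Tendsto s Filter.atTop Filter.atTop := by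
    apply (sqrt_tendsto_atTop.comp sqrt_tendsto_atTop).comp
    exact Filter.tendsto_atTop_add_const_right _ _ Filter.tendsto_id
  have t1 : Filter.Tendsto (fun v => r (s v) c) Filter.atTop (nhds 1) :=
    (r_tendsto_one c).comp hstendsto
  have t2 : Filter.Tendsto (fun v => s v / Real.sqrt (v - 1)) Filter.atTop (nhds 0) := by
    have heq : ∀ᶠ v : ℝ in Filter.atTop, (s v)⁻¹ = s v / Real.sqrt (v - 1) := by
      filter_upwards [Filter.eventually_ge_atTop (2 : ℝ)] with v hv
      have hv1 : (0:ℝ) ≤ v - 1 := by linarith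
      have hsq : s v ^ 2 = Real.sqrt (v - 1) := Real.sq_sqrt (Real.sqrt_nonneg _)
      have hspos : 0 < s v := Real.sqrt_pos.2 (Real.sqrt_pos.2 (by linarith))
      rw [← hsq]
      field_simp
    refine Filter.Tendsto.congr' heq ?_
    exact tendsto_inv_atTop_zero.comp hstendsto
  have t3 : Filter.Tendsto (fun v => r (s v / Real.sqrt (v - 1)) c)
      Filter.atTop (nhds (r 0 c)) := ((r_continuous' c).tendsto 0).comp t2
  have t4 : Filter.Tendsto (fun v => 1 - r (s v / Real.sqrt (v - 1)) c)
      Filter.atTop (nhds (1 - r 0 c)) :=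
    (tendsto_const_nhds (x := (1:ℝ)) (f := Filter.atTop)).sub t3
  have hgtendsto : Filter.Tendsto g Filter.atTop (nhds L) := by
    simpa [hLdef] using t1.mul t4
  refine tendsto_of_tendsto_of_tendsto_of_le_of_le' hgtendsto tendsto_const_nhds
    (Filter.Eventually.of_forall hglesup) (Filter.Eventually.of_forall hsuple)
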